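/- Let x : ℝ → ℝ^n be a curve, V1, V2 : ℝ^n → ℝ, N1, N2 : ℝ^n → ℝ nonnegative functions, and h : ℝ → ℝ nonnegative with h(0) = 0. Suppose there is a constant L > 0 with h(r) ≤ L·r for all r ≥ 0, and suppose that for every t ≥ 0 the maps t ↦ V1(x(t)) and t ↦ V2(x(t)) are differentiable with derivatives satisfying (d/dt)V1(x(t)) ≤ -N1(x(t)) and (d/dt)V2(x(t)) ≤ -N2(x(t)) + h(N1(x(t))). Then for every δ with 0 < δ < 1/L, setting W := V1 + δ·V2 and γ := min(1 - δ·L, δ), one has γ > 0 and, for all t ≥ 0, the map t ↦ W(x(t)) is differentiable with (d/dt)W(x(t)) ≤ -γ·(N1(x(t)) + N2(x(t))). -/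
import Mathlib


open Filter MeasureTheory

theorem stmt_0 {n : ℕ} (x : ℝ → EuclideanSpace ℝ (Fin n))
    (V1 V2 N1 N2 : EuclideanSpace ℝ (Fin n) → ℝ)
    (h : ℝ → ℝ)
    (hN1 : ∀ y, 0 ≤ N1 y) (hN2 : ∀ y, 0 ≤ N2 y)
    (hh : ∀ r, 0 ≤ h r) (hh0 : h 0 = 0)
    (L : ℝ) (hL : 0 < L) (hslope : ∀ r, 0 ≤ r → h r ≤ L * r)
    (v1' v2' : ℝ → ℝ)
    (hd1 : ∀ t, 0 ≤ t → HasDerivAt (fun s => V1 (x s)) (v1' t) t)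
    (hd2 : ∀ t, 0 ≤ t → HasDerivAt (fun s => V2 (x s)) (v2' t) t)
    (hineq1 : ∀ t, 0 ≤ t → v1' t ≤ -N1 (x t))
    (hineq2 : ∀ t, 0 ≤ t → v2' t ≤ -N2 (x t) + h (N1 (x t)))
    (δ : ℝ) (hδ0 : 0 < δ) (hδL : δ < 1 / L) :
    0 < min (1 - δ * L) δ ∧
    ∀ t, 0 ≤ t →
      ∃ w', HasDerivAt (fun s => V1 (x s) + δ * V2 (x s)) w' t ∧
        w' ≤ -(min (1 - δ * L) δ) * (N1 (x t) + N2 (x t)) := by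
  have hδL' : δ * L < 1 := by
    rw [lt_div_iff₀ hL] at hδL; linarith
  have hγ : 0 < min (1 - δ * L) δ := lt_min (by linarith) hδ0
  refine ⟨hγ, fun t ht => ?_⟩
  refine ⟨v1' t + δ * v2' t, ((hd1 t ht).add ((hd2 t ht).const_mul δ)), ?_⟩
  have h1 := hineq1 t ht
  have h2 := hineq2 t ht
  have h3 : h (N1 (x t)) ≤ L * N1 (x t) := hslope _ (hN1 _)
  have hm1 : min (1 - δ * L) δ ≤ 1 - δ * L := min_le_left _ _
  have hm2 : min (1 - δ * L) δ ≤ δ := min_le_right _ _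
  have hn1 := hN1 (x t)
  have hn2 := hN2 (x t)
  nlinarith [mul_le_mul_of_nonneg_left h2 hδ0.le, mul_le_mul_of_nonneg_left h3 hδ0.le]
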